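/- A sos form f of degree 2d is strictly sos (i.e., lies in the interior of the cone Σ_{2d}) if and only if U_f = R[x]_d. -/

import Mathlib

open MvPolynomial Finsupp Pointwise

/-- `f` is a sum of squares of forms of degree `d` in `n` variables. -/
def IsSOSForm (n d : ℕ) (f : MvPolynomial (Fin n) ℝ) : Prop :=
  ∃ (N : ℕ) (g : Fin N → MvPolynomial (Fin n) ℝ),
    (∀ i, (g i).IsHomogeneous d) ∧ f = ∑ i, (g i) ^ 2

/-- The cone `Σ_{2d}` of sums of squares of degree-`d` forms, as a subset of the
finite-dimensional real vector space `R[x]_{2d}` of forms of degree `2d`. -/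
def SigmaCone (n d : ℕ) : Set (homogeneousSubmodule (Fin n) ℝ (2 * d)) :=
  {f | IsSOSForm n d (f : MvPolynomial (Fin n) ℝ)}

/-- The canonical topology on the finite-dimensional real vector space of forms. -/
noncomputable instance (n d : ℕ) : TopologicalSpace (homogeneousSubmodule (Fin n) ℝ d) :=
  moduleTopology ℝ _

/-- A form is positive definite if it is positive away from the origin. -/
def PosDefForm (n : ℕ) (f : MvPolynomial (Fin n) ℝ) : Prop :=
  ∀ x : Fin n → ℝ, x ≠ 0 → 0 < eval x f

/-- For a sos form `f` of degree `2d`, the set `U_f` of forms `p` of degree `d`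
such that `f - c p ^ 2` is sos for some `c > 0`. -/
def Uset (n d : ℕ) (f : MvPolynomial (Fin n) ℝ) : Set (MvPolynomial (Fin n) ℝ) :=
  {p | p.IsHomogeneous d ∧ ∃ c : ℝ, 0 < c ∧ IsSOSForm n d (f - c • p ^ 2)}


section aux

variable {n d : ℕ}

lemma isSOS_zero : IsSOSForm n d 0 :=
  ⟨0, fun i => 0, fun i => isHomogeneous_zero _ _ _, by simp⟩

lemma isSOS_sq {p : MvPolynomial (Fin n) ℝ} (hp : p.IsHomogeneous d) :
    IsSOSForm n d (p ^ 2) := ⟨1, fun _ => p, fun _ => hp, by simp⟩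

lemma IsSOSForm.add {f g : MvPolynomial (Fin n) ℝ} (hf : IsSOSForm n d f)
    (hg : IsSOSForm n d g) : IsSOSForm n d (f + g) := by
  obtain ⟨N, a, ha, rfl⟩ := hf
  obtain ⟨M, b, hb, rfl⟩ := hg
  refine ⟨N + M, Fin.append a b, fun i => ?_, ?_⟩
  · refine Fin.addCases (fun j => ?_) (fun j => ?_) i
    · simpa using ha j
    · simpa using hb j
  · rw [Fin.sum_univ_add]
    simp

lemma IsSOSForm.smul {f : MvPolynomial (Fin n) ℝ} {c : ℝ} (hc : 0 ≤ c)
    (hf : IsSOSForm n d f) : IsSOSForm n d (c • f) := by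
  obtain ⟨N, a, ha, rfl⟩ := hf
  refine ⟨N, fun i => Real.sqrt c • a i, fun i =>
    (mem_homogeneousSubmodule _ _).mp
      ((homogeneousSubmodule (Fin n) ℝ d).smul_mem _ ((mem_homogeneousSubmodule _ _).mpr (ha i))), ?_⟩
  rw [Finset.smul_sum]
  refine Finset.sum_congr rfl fun i _ => ?_
  rw [smul_pow, Real.sq_sqrt hc]

lemma IsSOSForm.isHomogeneous {f : MvPolynomial (Fin n) ℝ} (hf : IsSOSForm n d f) :
    f.IsHomogeneous (2 * d) := by
  obtain ⟨N, g, hg, rfl⟩ := hf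
  exact IsHomogeneous.sum _ _ _ fun i _ => by simpa [mul_comm] using (hg i).pow 2


lemma exists_le_degree (γ : Fin n →₀ ℕ) (k : ℕ) (h : k ≤ γ.degree) :
    ∃ α : Fin n →₀ ℕ, α ≤ γ ∧ α.degree = k := by
  induction k with
  | zero => exact ⟨0, zero_le, by simp⟩
  | succ k ih =>
    obtain ⟨α, hle, hdeg⟩ := ih (Nat.le_of_succ_le h)
    have hlt : ∃ i, α i < γ i := by
      by_contra h'
      push_neg at h'
      have : α = γ := le_antisymm hle (Finsupp.le_def.mpr h')
      subst this
      omega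
    obtain ⟨i, hi⟩ := hlt
    refine ⟨α + Finsupp.single i 1, ?_, ?_⟩
    · rw [Finsupp.le_def]
      intro j
      rcases eq_or_ne j i with rfl | hji
      · simpa using hi
      · simp [Finsupp.single_apply, (Ne.symm hji)]
        exact Finsupp.le_def.mp hle j
    · rw [degree_eq_weight_one] at hdeg ⊢
      rw [map_add, hdeg]
      simp [weight_apply]

/-- The set of squares of degree-`d` forms. -/
def SqSet (n d : ℕ) : Set (MvPolynomial (Fin n) ℝ) :=
  {q | ∃ p : MvPolynomial (Fin n) ℝ, p.IsHomogeneous d ∧ q = p ^ 2}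

lemma monomial_mem_span_sq (γ : Fin n →₀ ℕ) (hγ : γ.degree = 2 * d) :
    (monomial γ (1 : ℝ)) ∈ Submodule.span ℝ (SqSet n d) := by
  obtain ⟨α, hle, hα⟩ := exists_le_degree γ d (by omega)
  set β := γ - α with hβdef
  have hαβ : α + β = γ := by
    ext i
    have := Finsupp.le_def.mp hle i
    simp only [hβdef, Finsupp.coe_add, Finsupp.coe_tsub, Pi.add_apply, Pi.sub_apply]
    omega
  have hβ : β.degree = d := by
    have h1 : Finsupp.degree (α + β) = Finsupp.degree α + Finsupp.degree β := by
      rw [degree_eq_weight_one, map_add]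
    rw [hαβ, hγ, hα] at h1
    omega
  set p := monomial α (1 : ℝ)
  set q := monomial β (1 : ℝ)
  have hp : p.IsHomogeneous d := isHomogeneous_monomial _ hα
  have hq : q.IsHomogeneous d := isHomogeneous_monomial _ hβ
  have hpq : p * q = monomial γ (1 : ℝ) := by
    rw [monomial_mul, one_mul, hαβ]
  have key : monomial γ (1 : ℝ) =
      (4⁻¹ : ℝ) • (p + q) ^ 2 - (4⁻¹ : ℝ) • (p - q) ^ 2 := by
    rw [← smul_sub]
    have h4 : (p + q) ^ 2 - (p - q) ^ 2 = 4 * (p * q) := by ring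
    rw [h4, hpq, smul_eq_C_mul, ← mul_assoc]
    have : (C (4⁻¹ : ℝ) * 4 : MvPolynomial (Fin n) ℝ) = 1 := by
      have h44 : ((4 : MvPolynomial (Fin n) ℝ)) = C (4 : ℝ) := by
        simp [map_ofNat]
      rw [h44, ← C_mul]
      norm_num
    rw [this, one_mul]
  rw [key]
  exact sub_mem
    (Submodule.smul_mem _ _ (Submodule.subset_span ⟨p + q, hp.add hq, rfl⟩))
    (Submodule.smul_mem _ _ (Submodule.subset_span ⟨p - q, hp.sub hq, rfl⟩))

lemma homog_le_span_monomials (k : ℕ) :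
    homogeneousSubmodule (Fin n) ℝ k ≤
      Submodule.span ℝ ((fun γ => monomial γ (1 : ℝ)) '' {γ : Fin n →₀ ℕ | γ.degree = k}) := by
  intro f hf
  rw [as_sum f]
  apply Submodule.sum_mem
  intro γ hγ
  have hc : coeff γ f ≠ 0 := MvPolynomial.mem_support_iff.mp hγ
  have hdeg : γ.degree = k := by
    have := ((mem_homogeneousSubmodule _ _).mp hf) hc
    rwa [degree_eq_weight_one]
  have : monomial γ (coeff γ f) = coeff γ f • monomial γ (1 : ℝ) := by
    rw [smul_monomial, smul_eq_mul, mul_one]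
  rw [this]
  exact Submodule.smul_mem _ _ (Submodule.subset_span ⟨γ, hdeg, rfl⟩)

lemma finite_degree_set (k : ℕ) : {γ : Fin n →₀ ℕ | γ.degree = k}.Finite := by
  apply (Set.finite_Icc 0 (equivFunOnFinite.symm fun _ : Fin n => k)).subset
  intro γ hγ
  refine ⟨zero_le, Finsupp.le_def.mpr fun i => ?_⟩
  have : γ i ≤ γ.degree := by
    rcases eq_or_ne (γ i) 0 with h0 | h0
    · simp [h0]
    · exact Finset.single_le_sum (fun j _ => Nat.zero_le _)
        (Finsupp.mem_support_iff.mpr h0)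
  simpa using this.trans_eq hγ

instance homog_findim (k : ℕ) : FiniteDimensional ℝ (homogeneousSubmodule (Fin n) ℝ k) := by
  have h1 : FiniteDimensional ℝ (Submodule.span ℝ
      ((fun γ => monomial γ (1 : ℝ)) '' {γ : Fin n →₀ ℕ | γ.degree = k})) :=
    FiniteDimensional.span_of_finite ℝ ((finite_degree_set k).image _)
  exact Submodule.finiteDimensional_of_le (homog_le_span_monomials k)

end aux

section coneV

variable (n d : ℕ)

lemma sigmaCone_convex : Convex ℝ (SigmaCone n d) := by
  intro x hx y hy a b ha hb hab
  have hco : ((a • x + b • y : homogeneousSubmodule (Fin n) ℝ (2 * d)) :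
      MvPolynomial (Fin n) ℝ)
      = a • (x : MvPolynomial (Fin n) ℝ) + b • (y : MvPolynomial (Fin n) ℝ) := by
    push_cast
    ring
  show IsSOSForm n d _
  rw [hco]
  exact IsSOSForm.add (IsSOSForm.smul ha hx) (IsSOSForm.smul hb hy)

lemma zero_mem_sigmaCone : (0 : homogeneousSubmodule (Fin n) ℝ (2 * d)) ∈ SigmaCone n d := by
  show IsSOSForm n d _
  rw [ZeroMemClass.coe_zero]
  exact isSOS_zero

lemma smul_mem_sigmaCone {t : ℝ} (ht : 0 ≤ t) {x : homogeneousSubmodule (Fin n) ℝ (2 * d)}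
    (hx : x ∈ SigmaCone n d) : t • x ∈ SigmaCone n d := by
  show IsSOSForm n d _
  rw [Submodule.coe_smul]
  exact IsSOSForm.smul ht hx

lemma span_sigmaCone_eq_top : Submodule.span ℝ (SigmaCone n d) = ⊤ := by
  rw [eq_top_iff]
  rintro ⟨f, hf⟩ -
  have h1 : f ∈ Submodule.span ℝ (SqSet n d) := by
    refine Submodule.span_le.mpr ?_ (homog_le_span_monomials (2 * d) hf)
    rintro _ ⟨γ, hγ, rfl⟩
    exact monomial_mem_span_sq γ hγ
  have h2 : f ∈ Submodule.span ℝ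
      ((homogeneousSubmodule (Fin n) ℝ (2 * d)).subtype '' SigmaCone n d) := by
    refine Submodule.span_mono ?_ h1
    rintro q ⟨p, hp, rfl⟩
    have hmem : p ^ 2 ∈ homogeneousSubmodule (Fin n) ℝ (2 * d) := by
      rw [mem_homogeneousSubmodule]
      simpa [mul_comm] using hp.pow 2
    exact ⟨⟨p ^ 2, hmem⟩, isSOS_sq hp, rfl⟩
  rw [Submodule.span_image] at h2
  obtain ⟨w, hw, hweq⟩ := h2
  have hwe : w = ⟨f, hf⟩ := Subtype.ext hweq
  exact hwe ▸ hw

instance instMT (k : ℕ) : IsModuleTopology ℝ (homogeneousSubmodule (Fin n) ℝ k) := ⟨rfl⟩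

instance instTAG (k : ℕ) : IsTopologicalAddGroup (homogeneousSubmodule (Fin n) ℝ k) :=
  letI : ContinuousAdd (homogeneousSubmodule (Fin n) ℝ k) :=
    IsModuleTopology.toContinuousAdd ℝ _
  { continuous_neg := IsModuleTopology.continuous_neg ℝ _ }

set_option synthInstance.maxHeartbeats 1000000 in
lemma sigmaCone_interior_nonempty : (interior (SigmaCone n d)).Nonempty := by
  set V := homogeneousSubmodule (Fin n) ℝ (2 * d) with hV
  let b := Module.finBasis ℝ V
  let e : V ≃L[ℝ] (Fin (Module.finrank ℝ V) → ℝ) :=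
    { b.equivFun with
      continuous_toFun := IsModuleTopology.continuous_of_linearMap b.equivFun.toLinearMap
      continuous_invFun :=
        LinearMap.continuous_of_finiteDimensional b.equivFun.symm.toLinearMap }
  have hconv : Convex ℝ (⇑e '' SigmaCone n d) :=
    (sigmaCone_convex n d).linear_image (e.toLinearEquiv.toLinearMap)
  have hzero : (0 : Fin (Module.finrank ℝ V) → ℝ) ∈ ⇑e '' SigmaCone n d :=
    ⟨0, zero_mem_sigmaCone n d, map_zero e⟩
  have haff : affineSpan ℝ (⇑e '' SigmaCone n d) = ⊤ := by
    rw [AffineSubspace.affineSpan_eq_top_iff_vectorSpan_eq_top_of_nonempty ℝ _ _ ⟨0, hzero⟩]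
    rw [eq_top_iff]
    have hsp : Submodule.span ℝ (⇑e '' SigmaCone n d) = ⊤ := by
      have : (⇑e '' SigmaCone n d) = ⇑(e.toLinearEquiv.toLinearMap) '' SigmaCone n d := rfl
      rw [this, Submodule.span_image, span_sigmaCone_eq_top, Submodule.map_top]
      exact LinearMap.range_eq_top.mpr e.toLinearEquiv.surjective
    calc (⊤ : Submodule ℝ _) = Submodule.span ℝ (⇑e '' SigmaCone n d) := hsp.symm
      _ ≤ vectorSpan ℝ (⇑e '' SigmaCone n d) := by
          rw [vectorSpan_def]
          apply Submodule.span_mono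
          intro x hx
          exact ⟨x, hx, 0, hzero, by simp⟩
  obtain ⟨y, hy⟩ := hconv.interior_nonempty_iff_affineSpan_eq_top.mpr haff
  have himg := e.toHomeomorph.image_interior (SigmaCone n d)
  simp only [ContinuousLinearEquiv.coe_toHomeomorph] at himg
  rw [← himg] at hy
  obtain ⟨x, hx, hxy⟩ := hy
  exact ⟨x, hx⟩

lemma smul_mem_interior_sigmaCone {t : ℝ} (ht : 0 < t)
    {x : homogeneousSubmodule (Fin n) ℝ (2 * d)} (hx : x ∈ interior (SigmaCone n d)) :
    t • x ∈ interior (SigmaCone n d) := by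
  have h1 : t • x ∈ t • interior (SigmaCone n d) := Set.smul_mem_smul_set hx
  rw [← interior_smul₀ (ne_of_gt ht)] at h1
  refine interior_mono ?_ h1
  rintro y ⟨z, hz, rfl⟩
  exact smul_mem_sigmaCone n d ht.le hz

end coneV


theorem strictly_sos_iff_Uset_eq (n d : ℕ) (f : MvPolynomial (Fin n) ℝ)
    (hsos : IsSOSForm n d f) (hf : f ∈ homogeneousSubmodule (Fin n) ℝ (2 * d)) :
    (⟨f, hf⟩ : homogeneousSubmodule (Fin n) ℝ (2 * d)) ∈ interior (SigmaCone n d) ↔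
      Uset n d f = {p : MvPolynomial (Fin n) ℝ | p.IsHomogeneous d} := by
  constructor
  · intro hint
    apply Set.Subset.antisymm (fun p hp => hp.1)
    intro p hp
    have hp' : MvPolynomial.IsHomogeneous p d := hp
    have hq : p ^ 2 ∈ homogeneousSubmodule (Fin n) ℝ (2 * d) := by
      rw [mem_homogeneousSubmodule]
      simpa [mul_comm] using hp'.pow 2
    set q : homogeneousSubmodule (Fin n) ℝ (2 * d) := ⟨p ^ 2, hq⟩ with hqdef
    have hφ : Continuous fun c : ℝ =>
        (⟨f, hf⟩ : homogeneousSubmodule (Fin n) ℝ (2 * d)) - c • q :=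
      continuous_const.sub (continuous_id.smul continuous_const)
    have hopen : IsOpen ((fun c : ℝ =>
        (⟨f, hf⟩ : homogeneousSubmodule (Fin n) ℝ (2 * d)) - c • q) ⁻¹'
        interior (SigmaCone n d)) := isOpen_interior.preimage hφ
    have h0 : (0 : ℝ) ∈ ((fun c : ℝ =>
        (⟨f, hf⟩ : homogeneousSubmodule (Fin n) ℝ (2 * d)) - c • q) ⁻¹'
        interior (SigmaCone n d)) := by
      simpa using hint
    obtain ⟨ε, hε, hball⟩ := Metric.isOpen_iff.mp hopen 0 h0
    have hc : (ε / 2 : ℝ) ∈ Metric.ball (0 : ℝ) ε := by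
      rw [Metric.mem_ball, Real.dist_eq]
      rw [abs_of_pos (by linarith)]
      linarith
    have hmem := interior_subset (hball hc)
    refine ⟨hp', ε / 2, by positivity, ?_⟩
    have hcoe : ((⟨f, hf⟩ - (ε / 2) • q :
        homogeneousSubmodule (Fin n) ℝ (2 * d)) : MvPolynomial (Fin n) ℝ)
        = f - (ε / 2) • p ^ 2 := rfl
    have hmem' : IsSOSForm n d ((⟨f, hf⟩ - (ε / 2) • q :
        homogeneousSubmodule (Fin n) ℝ (2 * d)) : MvPolynomial (Fin n) ℝ) := hmem
    rwa [hcoe] at hmem'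
  · intro hU
    by_contra hint
    obtain ⟨L, hL⟩ := geometric_hahn_banach_open_point
      ((sigmaCone_convex n d).interior) isOpen_interior hint
    set fv : homogeneousSubmodule (Fin n) ℝ (2 * d) := ⟨f, hf⟩ with hfv
    obtain ⟨b, hb⟩ := sigmaCone_interior_nonempty n d
    have hbf : L b < L fv := hL b hb
    have hLf_nonneg : 0 ≤ L fv := by
      by_contra hneg
      push_neg at hneg
      have hLb_neg : L b < 0 := hbf.trans hneg
      set t : ℝ := L fv / (2 * L b) with htdef
      have ht : 0 < t := div_pos_iff.mpr (Or.inr ⟨hneg, by linarith⟩)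
      have hmem := smul_mem_interior_sigmaCone n d ht hb
      have hlt := hL _ hmem
      rw [map_smul, smul_eq_mul] at hlt
      have heq : t * L b = L fv / 2 := by
        rw [htdef]
        field_simp
        rw [div_eq_iff (ne_of_lt hLb_neg)]
      rw [heq] at hlt
      linarith
    have hLS : ∀ a ∈ SigmaCone n d, L a ≤ 0 := by
      intro a ha
      by_contra hpos
      push_neg at hpos
      set t : ℝ := max 1 ((2 * L fv - L b + 1) / L a) with htdef
      have ht : 0 < t := lt_of_lt_of_le one_pos (le_max_left _ _)
      have hta : (2 * L fv - L b + 1) ≤ t * L a := by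
        calc (2 * L fv - L b + 1) = ((2 * L fv - L b + 1) / L a) * L a := by
              field_simp
          _ ≤ t * L a := mul_le_mul_of_nonneg_right (le_max_right _ _) hpos.le
      have hmem : (1 / 2 : ℝ) • b + (1 / 2 : ℝ) • (t • a) ∈ interior (SigmaCone n d) :=
        (sigmaCone_convex n d).combo_interior_self_mem_interior hb
          (smul_mem_sigmaCone n d ht.le ha) (by norm_num) (by norm_num) (by norm_num)
      have hlt := hL _ hmem
      simp only [map_add, map_smul, smul_eq_mul] at hlt
      linarith
    have hfS : fv ∈ SigmaCone n d := hsos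
    have hLf0 : L fv = 0 := le_antisymm (hLS _ hfS) hLf_nonneg
    have hbS : IsSOSForm n d (b : MvPolynomial (Fin n) ℝ) := (interior_subset hb : b ∈ SigmaCone n d)
    obtain ⟨N, g, hg, hsum⟩ := hbS
    have hgm : ∀ i, (g i) ^ 2 ∈ homogeneousSubmodule (Fin n) ℝ (2 * d) := fun i => by
      rw [mem_homogeneousSubmodule]
      simpa [mul_comm] using (hg i).pow 2
    have hbeq : b = ∑ i, (⟨(g i) ^ 2, hgm i⟩ :
        homogeneousSubmodule (Fin n) ℝ (2 * d)) := by
      apply Subtype.ext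
      rw [AddSubmonoidClass.coe_finset_sum]
      exact hsum
    have hLb0 : L b < 0 := by rw [← hLf0]; exact hbf
    have hex : ∃ i, L (⟨(g i) ^ 2, hgm i⟩ :
        homogeneousSubmodule (Fin n) ℝ (2 * d)) < 0 := by
      by_contra hall
      push_neg at hall
      have : 0 ≤ L b := by
        rw [hbeq, map_sum]
        exact Finset.sum_nonneg fun i _ => hall i
      linarith
    obtain ⟨i, hi⟩ := hex
    have hgU : g i ∈ Uset n d f := by rw [hU]; exact hg i
    obtain ⟨-, c, hc, hsos'⟩ := hgU
    have hwmem : f - c • (g i) ^ 2 ∈ homogeneousSubmodule (Fin n) ℝ (2 * d) :=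
      Submodule.sub_mem _ hf (Submodule.smul_mem _ _ (hgm i))
    have hwS : (⟨f - c • (g i) ^ 2, hwmem⟩ :
        homogeneousSubmodule (Fin n) ℝ (2 * d)) ∈ SigmaCone n d := hsos'
    have hle := hLS _ hwS
    have hw_eq : (⟨f - c • (g i) ^ 2, hwmem⟩ :
        homogeneousSubmodule (Fin n) ℝ (2 * d))
        = fv - c • ⟨(g i) ^ 2, hgm i⟩ := rfl
    rw [hw_eq, map_sub, map_smul, hLf0, smul_eq_mul] at hle
    nlinarith
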